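/- There exists a constant C_K > 0, depending only on K, such that for every adele ξ = (ξ_ν) ∈ 𝔸_K with ξ_ν ≠ 0 for all ν and ∏_ν |ξ_ν|_ν > C_K, there exists λ ∈ K^× with |λ|_ν ≤ |ξ_ν|_ν for all places ν of K. -/

import Mathlib

set_option synthInstance.maxHeartbeats 1000000
set_option maxHeartbeats 1000000

open NumberField IsDedekindDomain

noncomputable section

namespace AdeleAux

variable {K : Type*} [Field K] [NumberField K]

theorem absNorm_nnreal_ne_zero (v : HeightOneSpectrum (𝓞 K)) :
    ((Ideal.absNorm v.asIdeal : NNReal)) ≠ 0 := by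
  exact_mod_cast fun h => v.ne_bot (Ideal.absNorm_eq_zero_iff.mp (by exact_mod_cast h))

/-- The normalized absolute value at a finite place `v` of `K`, on the
`v`-adic completion of `K`: a uniformizer has absolute value `Nm(𝔭)⁻¹`. -/
def finAbs (v : HeightOneSpectrum (𝓞 K)) (x : v.adicCompletion K) : ℝ :=
  (WithZeroMulInt.toNNReal (absNorm_nnreal_ne_zero v) (Valued.v x) : ℝ)

end AdeleAux

namespace StmtAux

open FractionalIdeal Multiplicative WithZero Function

variable {K : Type*} [Field K] [NumberField K]

theorem one_lt_absNorm_nnreal (v : HeightOneSpectrum (𝓞 K)) :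
    1 < (Ideal.absNorm v.asIdeal : NNReal) := by
  have h0 : Ideal.absNorm v.asIdeal ≠ 0 :=
    fun h => v.ne_bot (Ideal.absNorm_eq_zero_iff.mp h)
  have h1 : Ideal.absNorm v.asIdeal ≠ 1 :=
    fun h => v.isPrime.ne_top (Ideal.absNorm_eq_one_iff.mp h)
  have : 1 < Ideal.absNorm v.asIdeal := by omega
  exact_mod_cast this

theorem val_count (v : HeightOneSpectrum (𝓞 K)) {a : K} (ha : a ≠ 0) :
    v.valuation K a =
      ((ofAdd (-(count K v (spanSingleton (nonZeroDivisors (𝓞 K)) a))) : Multiplicative ℤ) :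
        ℤᵐ⁰) := by
  obtain ⟨⟨r, s⟩, (hrs : IsLocalization.mk' K r s = a)⟩ := IsLocalization.mk'_surjective (nonZeroDivisors (𝓞 K)) a
  have hr : r ≠ 0 := by
    rintro rfl
    rw [IsLocalization.mk'_zero] at hrs
    exact ha hrs.symm
  have hs0 : (s : 𝓞 K) ≠ 0 := nonZeroDivisors.coe_ne_zero s
  have hspan : spanSingleton (nonZeroDivisors (𝓞 K)) a =
      spanSingleton (nonZeroDivisors (𝓞 K)) ((algebraMap (𝓞 K) K s))⁻¹ * ↑(Ideal.span {r}) := by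
    rw [coeIdeal_span_singleton, spanSingleton_mul_spanSingleton, ← hrs,
      IsFractionRing.mk'_eq_div, div_eq_mul_inv, mul_comm]
  have hne : spanSingleton (nonZeroDivisors (𝓞 K)) a ≠ 0 := by
    rwa [ne_eq, spanSingleton_eq_zero_iff]
  have hcount := count_well_defined K v hne hspan
  rw [hcount, ← hrs, IsDedekindDomain.HeightOneSpectrum.valuation_of_mk',
    IsDedekindDomain.HeightOneSpectrum.intValuation_apply,
    IsDedekindDomain.HeightOneSpectrum.intValuation_apply,
    v.intValuationDef_if_neg hr, v.intValuationDef_if_neg hs0,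
    WithZero.exp_eq_coe_ofAdd, WithZero.exp_eq_coe_ofAdd, ← WithZero.coe_div, WithZero.coe_inj, ← ofAdd_sub]
  congr 1
  ring

theorem finprod_ne_zero' {m : HeightOneSpectrum (𝓞 K) → ℤ} (hm : {v | m v ≠ 0}.Finite) :
    (∏ᶠ v : HeightOneSpectrum (𝓞 K),
      (v.asIdeal : FractionalIdeal (nonZeroDivisors (𝓞 K)) K) ^ (m v)) ≠ 0 := by
  have hsub : mulSupport (fun v : HeightOneSpectrum (𝓞 K) =>
      (v.asIdeal : FractionalIdeal (nonZeroDivisors (𝓞 K)) K) ^ (m v)) ⊆ ↑hm.toFinset := by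
    intro v hv
    simp only [Set.Finite.coe_toFinset, Set.mem_setOf_eq]
    intro h0
    exact hv (by simp [h0])
  rw [finprod_eq_prod_of_mulSupport_subset _ hsub]
  exact Finset.prod_ne_zero_iff.mpr fun v _ =>
    zpow_ne_zero _ (coeIdeal_ne_zero.mpr v.ne_bot)

theorem val_le_of_mem {m : HeightOneSpectrum (𝓞 K) → ℤ} (hm : {v | m v ≠ 0}.Finite)
    {a : K} (ha : a ≠ 0)
    (hmem : a ∈ (∏ᶠ v : HeightOneSpectrum (𝓞 K),
      (v.asIdeal : FractionalIdeal (nonZeroDivisors (𝓞 K)) K) ^ (-(m v))))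
    (v : HeightOneSpectrum (𝓞 K)) :
    v.valuation K a ≤ ((ofAdd (m v) : Multiplicative ℤ) : ℤᵐ⁰) := by
  have hne : spanSingleton (nonZeroDivisors (𝓞 K)) a ≠ 0 := by
    rwa [ne_eq, spanSingleton_eq_zero_iff]
  have hle := spanSingleton_le_iff_mem.mpr hmem
  have hmono := count_mono K v hne hle
  have hcf : count K v (∏ᶠ v : HeightOneSpectrum (𝓞 K),
      (v.asIdeal : FractionalIdeal (nonZeroDivisors (𝓞 K)) K) ^ (-(m v))) = -(m v) := by
    apply count_finprod
    rw [Filter.eventually_cofinite]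
    apply hm.subset
    intro w hw
    simp only [Set.mem_setOf_eq] at hw ⊢
    omega
  rw [hcf] at hmono
  rw [val_count v ha, WithZero.coe_le_coe, Multiplicative.ofAdd_le]
  omega

end StmtAux

open FractionalIdeal Multiplicative WithZero Function NumberField.mixedEmbedding in
/-- Cassels: for a number field `K` there is a constant `C_K > 0`
such that every adele `ξ` all of whose components are nonzero and whose total
absolute value `∏_ν |ξ_ν|_ν` (a well-defined finite product once all but
finitely many factors are `1`, which is implicit in the hypothesis
`∏_ν |ξ_ν|_ν > C_K > 0`) exceeds `C_K` dominates a principal adele: there is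
`λ ∈ K^×` with `|λ|_ν ≤ |ξ_ν|_ν` for all places `ν` of `K`.  The normalized
absolute values are as in the context: `‖·‖ ^ mult` at infinite places, and at
finite places a uniformizer at `𝔭` has absolute value `Nm(𝔭)⁻¹`. -/
theorem stmt_8 (K : Type*) [Field K] [NumberField K] :
    ∃ C : ℝ, 0 < C ∧
      ∀ ξ : AdeleRing (𝓞 K) K,
        (∀ v : InfinitePlace K, ξ.1 v ≠ 0) →
        (∀ v : HeightOneSpectrum (𝓞 K), ξ.2 v ≠ 0) →
        {v : HeightOneSpectrum (𝓞 K) | AdeleAux.finAbs v (ξ.2 v) ≠ 1}.Finite →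
        C < (∏ v : InfinitePlace K, ‖ξ.1 v‖ ^ v.mult) *
              (∏ᶠ v : HeightOneSpectrum (𝓞 K), AdeleAux.finAbs v (ξ.2 v)) →
        ∃ l : K, l ≠ 0 ∧
          (∀ v : InfinitePlace K,
            ‖(algebraMap K (AdeleRing (𝓞 K) K) l).1 v‖ ^ v.mult ≤ ‖ξ.1 v‖ ^ v.mult) ∧
          (∀ v : HeightOneSpectrum (𝓞 K),
            AdeleAux.finAbs v ((algebraMap K (AdeleRing (𝓞 K) K) l).2 v) ≤
              AdeleAux.finAbs v (ξ.2 v)) := by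
  classical
  refine ⟨(minkowskiBound K 1).toReal / (convexBodyLTFactor K : ℝ), ?_, ?_⟩
  · apply div_pos
    · exact ENNReal.toReal_pos (minkowskiBound_pos K 1).ne' (minkowskiBound_lt_top K 1).ne
    · exact_mod_cast (convexBodyLTFactor_ne_zero K).bot_lt
  intro ξ hinf hfin hfinite hC
  have hval : ∀ v : HeightOneSpectrum (𝓞 K), Valued.v (ξ.2 v) ≠ 0 :=
    fun v h => hfin v ((Valuation.zero_iff _).mp h)
  set m : HeightOneSpectrum (𝓞 K) → ℤ :=
    fun v => Multiplicative.toAdd (WithZero.unzero (hval v)) with hm_def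
  have hfinAbs_eq : ∀ v, AdeleAux.finAbs v (ξ.2 v) =
      (((Ideal.absNorm v.asIdeal : NNReal) : ℝ) ^ (m v)) := by
    intro v
    rw [AdeleAux.finAbs, WithZeroMulInt.toNNReal_neg_apply _ (hval v)]
    rw [NNReal.coe_zpow]
  have hValEq : ∀ v, ((Multiplicative.ofAdd (m v) : Multiplicative ℤ) : ℤᵐ⁰)
      = Valued.v (ξ.2 v) := by
    intro v
    rw [hm_def, ofAdd_toAdd, WithZero.coe_unzero]
  have hone : ∀ v, m v = 0 → AdeleAux.finAbs v (ξ.2 v) = 1 := by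
    intro v hv
    rw [hfinAbs_eq v, hv, zpow_zero]
  have hmfin : {v : HeightOneSpectrum (𝓞 K) | m v ≠ 0}.Finite := by
    apply hfinite.subset
    intro v hv
    simp only [Set.mem_setOf_eq] at hv ⊢
    intro h1
    apply hv
    rw [AdeleAux.finAbs] at h1
    have h1' : WithZeroMulInt.toNNReal (AdeleAux.absNorm_nnreal_ne_zero v)
        (Valued.v (ξ.2 v)) = 1 := by
      exact_mod_cast h1
    have hv1 := (WithZeroMulInt.toNNReal_eq_one_iff (Valued.v (ξ.2 v))
      (AdeleAux.absNorm_nnreal_ne_zero v) (StmtAux.one_lt_absNorm_nnreal v).ne').mp h1'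
    have hu1 : WithZero.unzero (hval v) = 1 := by
      apply WithZero.coe_inj.mp
      rw [WithZero.coe_unzero, hv1, WithZero.coe_one]
    show Multiplicative.toAdd (WithZero.unzero (hval v)) = 0
    rw [hu1, toAdd_one]
  -- the fractional ideal
  set I₀ : FractionalIdeal (nonZeroDivisors (𝓞 K)) K :=
    ∏ᶠ v : HeightOneSpectrum (𝓞 K),
      (v.asIdeal : FractionalIdeal (nonZeroDivisors (𝓞 K)) K) ^ (-(m v)) with hI₀_def
  have hmneg : {v : HeightOneSpectrum (𝓞 K) | -(m v) ≠ 0}.Finite := by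
    apply hmfin.subset; intro v; simp only [Set.mem_setOf_eq]; omega
  have hI₀ : I₀ ≠ 0 := StmtAux.finprod_ne_zero' hmneg
  set T := hmfin.toFinset with hT_def
  have hsuppI : mulSupport (fun v : HeightOneSpectrum (𝓞 K) =>
      (v.asIdeal : FractionalIdeal (nonZeroDivisors (𝓞 K)) K) ^ (-(m v))) ⊆ ↑T := by
    intro v hv
    rw [hT_def, Set.Finite.coe_toFinset]
    simp only [Set.mem_setOf_eq]
    intro h0
    exact hv (by simp [h0])
  have hsuppA : mulSupport (fun v : HeightOneSpectrum (𝓞 K) =>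
      AdeleAux.finAbs v (ξ.2 v)) ⊆ ↑T := by
    intro v hv
    rw [hT_def, Set.Finite.coe_toFinset]
    simp only [Set.mem_setOf_eq]
    intro h0
    exact hv (hone v h0)
  have hNm_ne : ∀ v : HeightOneSpectrum (𝓞 K),
      ((Ideal.absNorm v.asIdeal : NNReal) : ℝ) ≠ 0 :=
    fun v => ne_of_gt (lt_trans one_pos (by exact_mod_cast StmtAux.one_lt_absNorm_nnreal v))
  -- absNorm computation
  have habsN : ((absNorm I₀ : ℚ) : ℝ) =
      ∏ v ∈ T, (((Ideal.absNorm v.asIdeal : NNReal) : ℝ) ^ (-(m v))) := by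
    rw [hI₀_def, finprod_eq_prod_of_mulSupport_subset _ hsuppI, map_prod]
    push_cast
    refine Finset.prod_congr rfl fun v _ => ?_
    rw [map_zpow₀, coeIdeal_absNorm]
    push_cast
    rfl
  set Pf : ℝ := ∏ᶠ v : HeightOneSpectrum (𝓞 K), AdeleAux.finAbs v (ξ.2 v) with hPf_def
  have hPf_eq : Pf = ∏ v ∈ T, (((Ideal.absNorm v.asIdeal : NNReal) : ℝ) ^ (m v)) := by
    rw [hPf_def, finprod_eq_prod_of_mulSupport_subset _ hsuppA]
    exact Finset.prod_congr rfl fun v _ => hfinAbs_eq v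
  have hmul1 : ((absNorm I₀ : ℚ) : ℝ) * Pf = 1 := by
    rw [habsN, hPf_eq, ← Finset.prod_mul_distrib]
    apply Finset.prod_eq_one
    intro v _
    rw [zpow_neg, inv_mul_cancel₀ (zpow_ne_zero _ (hNm_ne v))]
  set N : ℝ := ((absNorm I₀ : ℚ) : ℝ) with hN_def
  have hN0 : 0 < N := by
    rcases (absNorm_nonneg I₀).lt_or_eq with h | h
    · rw [hN_def]; exact_mod_cast h
    · exact absurd (absNorm_eq_zero_iff.mp h.symm) hI₀
  have hPf_inv : Pf = N⁻¹ := by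
    field_simp
    linarith [hmul1]
  -- Minkowski
  set f : InfinitePlace K → NNReal := fun w => ‖ξ.1 w‖₊ with hf_def
  set I : (FractionalIdeal (nonZeroDivisors (𝓞 K)) K)ˣ := Units.mk0 I₀ hI₀ with hI_def
  have hIval : (I : FractionalIdeal (nonZeroDivisors (𝓞 K)) K) = I₀ := rfl
  have hQcoe : ((∏ w : InfinitePlace K, f w ^ w.mult : NNReal) : ℝ) =
      ∏ w : InfinitePlace K, ‖ξ.1 w‖ ^ w.mult := by
    push_cast
    rfl
  have hcBF : (0:ℝ) < (convexBodyLTFactor K : ℝ) := by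
    exact_mod_cast (convexBodyLTFactor_ne_zero K).bot_lt
  have hkey : N * (minkowskiBound K 1).toReal <
      (convexBodyLTFactor K : ℝ) * ((∏ w : InfinitePlace K, f w ^ w.mult : NNReal) : ℝ) := by
    rw [hPf_inv] at hC
    have hC' : (minkowskiBound K 1).toReal / (convexBodyLTFactor K : ℝ) <
        (∏ v : InfinitePlace K, ‖ξ.1 v‖ ^ v.mult) / N := by
      rw [div_eq_mul_inv]; exact hC
    have h1 := (div_lt_div_iff₀ hcBF hN0).mp hC'
    rw [hQcoe]
    nlinarith [h1]
  have hminkI : minkowskiBound K I = ENNReal.ofReal N * minkowskiBound K 1 := by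
    rw [minkowskiBound, minkowskiBound,
      volume_fundamentalDomain_fractionalIdealLatticeBasis,
      volume_fundamentalDomain_fractionalIdealLatticeBasis]
    rw [hIval]
    simp only [Units.val_one, absNorm_one, Rat.cast_one, ENNReal.ofReal_one, one_mul]
    rw [hN_def]
    ring
  have hbound : minkowskiBound K I < MeasureTheory.volume (convexBodyLT K f) := by
    rw [convexBodyLT_volume, hminkI]
    calc ENNReal.ofReal N * minkowskiBound K 1
        = ENNReal.ofReal (N * (minkowskiBound K 1).toReal) := by
          rw [ENNReal.ofReal_mul hN0.le, ENNReal.ofReal_toReal (minkowskiBound_lt_top K 1).ne]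
      _ < ENNReal.ofReal ((convexBodyLTFactor K : ℝ) *
            ((∏ w : InfinitePlace K, f w ^ w.mult : NNReal) : ℝ)) := by
          exact (ENNReal.ofReal_lt_ofReal_iff_of_nonneg (by positivity)).mpr hkey
      _ = ↑(convexBodyLTFactor K) * ↑(∏ w : InfinitePlace K, f w ^ w.mult) := by
          rw [ENNReal.ofReal_mul hcBF.le, ENNReal.ofReal_coe_nnreal, ENNReal.ofReal_coe_nnreal]
  obtain ⟨a, hamem, ha0, haw⟩ := exists_ne_zero_mem_ideal_lt K I hbound
  refine ⟨a, ha0, ?_, ?_⟩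
  · intro w
    have h1 : ‖(algebraMap K (AdeleRing (𝓞 K) K) a).1 w‖ = w a := by
      rw [NumberField.AdeleRing.algebraMap_fst_apply]
      exact (UniformSpace.Completion.norm_coe (E := WithAbs w.1) (WithAbs.toAbs w.1 a)).trans rfl
    have h2 : w a ≤ ‖ξ.1 w‖ := by
      simpa [hf_def] using (haw w).le
    have h3 : ‖(algebraMap K (AdeleRing (𝓞 K) K) a).1 w‖ ≤ ‖ξ.1 w‖ := by rw [h1]; exact h2
    exact pow_le_pow_left₀ (norm_nonneg _) h3 _
  · intro v
    have hmem' : a ∈ I₀ := by rwa [hIval] at hamem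
    rw [hI₀_def] at hmem'
    have hvle := StmtAux.val_le_of_mem hmfin ha0 hmem' v
    rw [hValEq v] at hvle
    have hcoe : Valued.v ((algebraMap K (AdeleRing (𝓞 K) K) a).2 v) = v.valuation K a := by
      rw [NumberField.AdeleRing.algebraMap_snd_apply]
      exact v.valuedAdicCompletion_eq_valuation' a
    rw [AdeleAux.finAbs, AdeleAux.finAbs, hcoe]
    exact_mod_cast (WithZeroMulInt.toNNReal_strictMono
      (StmtAux.one_lt_absNorm_nnreal v)).monotone hvle
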